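/- arXiv:2406.09879 — 4 statements merged into one kernel-verified Lean document; each statement's English description precedes it below -/
import Mathlib

section
/- Let φ : A → B be a ring homomorphism between reduced commutative Noetherian rings making B a finitely generated A-module (a module-finite algebra), and suppose that the induced map Spec B → Spec A on prime spectra is open and surjective. Then a finitely generated B-module M is torsion-free as a B-module if and only if M, viewed as an A-module by restriction of scalars along φ, is torsion-free as an A-module. -/
open Localization.AtPrime IsLocalization.AtPrime in
/-- In a reduced ring, every element of a minimal prime is a zero divisor. -/
lemma aux_not_nonZeroDivisor_of_mem_minimal {R : Type*} [CommRing R] [IsReduced R]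
    {p : Ideal R} (hp : p ∈ minimalPrimes R) {a : R} (ha : a ∈ p) :
    a ∉ nonZeroDivisors R := by
  haveI hprime : p.IsPrime := hp.1.1
  -- the image of `a` in the localization at `p` is nilpotent, hence zero
  have h1 : IsNilpotent (algebraMap R (Localization p.primeCompl) a) := by
    haveI : Ring.KrullDimLE 0 (Localization p.primeCompl) := .of_isLocalization p hp _
    rw [Ring.KrullDimLE.isNilpotent_iff_mem_maximalIdeal]
    exact (to_map_mem_maximal_iff (Localization p.primeCompl) p a).mpr ha

  have h2 : algebraMap R (Localization p.primeCompl) a = 0 := h1.eq_zero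
  rw [IsLocalization.map_eq_zero_iff p.primeCompl] at h2
  obtain ⟨⟨s, hs⟩, hsa⟩ := h2
  intro hnzd
  have : s = 0 := mem_nonZeroDivisors_iff_right.mp hnzd _ hsa
  exact hs (this ▸ p.zero_mem)

/-- In a reduced ring, a zero divisor lies in some minimal prime. -/
lemma aux_exists_minimal_of_not_nonZeroDivisor {R : Type*} [CommRing R] [IsReduced R]
    {a : R} (ha : a ∉ nonZeroDivisors R) :
    ∃ p ∈ minimalPrimes R, a ∈ p := by
  rw [mem_nonZeroDivisors_iff_right] at ha
  push_neg at ha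
  obtain ⟨b, hab, hb⟩ := ha
  -- `b ≠ 0 = nilradical`, so `b` avoids some minimal prime
  have hsinf : sInf (minimalPrimes R) = ⊥ := by
    rw [minimalPrimes, Ideal.sInf_minimalPrimes]
    exact nilradical_eq_zero R
  have hbn : b ∉ sInf (minimalPrimes R) := by
    rw [hsinf]
    simpa using hb
  rw [Ideal.mem_sInf] at hbn
  push_neg at hbn
  obtain ⟨p, hp, hbp⟩ := hbn
  have hprime : p.IsPrime := hp.1.1
  refine ⟨p, hp, ?_⟩
  rcases hprime.mem_or_mem (show b * a ∈ p from hab ▸ p.zero_mem) with h | h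
  · exact absurd h hbp
  · exact h

/-- If `Spec B → Spec A` is open, then minimal primes of `B` contract to
minimal primes of `A`. -/
lemma aux_comap_minimal_of_minimal {A B : Type*} [CommRing A] [CommRing B] [Algebra A B]
    (hopen : IsOpenMap (PrimeSpectrum.comap (algebraMap A B)))
    {q : Ideal B} (hq : q ∈ minimalPrimes B) :
    q.comap (algebraMap A B) ∈ minimalPrimes A := by
  have hqprime : q.IsPrime := hq.1.1
  set p : Ideal A := q.comap (algebraMap A B) with hpdef
  have hpprime : p.IsPrime := Ideal.IsPrime.comap _
  obtain ⟨p', hp', hp'le⟩ := Ideal.exists_minimalPrimes_le (bot_le (a := p))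
  have hp'prime : p'.IsPrime := hp'.1.1
  -- The multiplicative set of products `φ(a) * t` with `a ∉ p'`, `t ∉ q`.
  set S : Submonoid B :=
    { carrier := {x | ∃ a ∈ p'.primeCompl, ∃ t ∈ q.primeCompl, algebraMap A B a * t = x}
      one_mem' := ⟨1, p'.primeCompl.one_mem, 1, q.primeCompl.one_mem, by simp⟩
      mul_mem' := by
        rintro x y ⟨a, ha, t, ht, rfl⟩ ⟨a', ha', t', ht', rfl⟩
        exact ⟨a * a', p'.primeCompl.mul_mem ha ha', t * t', q.primeCompl.mul_mem ht ht',
          by rw [map_mul]; ring⟩ } with hSdef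
  -- `0 ∉ S`, using openness of the spectrum map
  have h0 : Disjoint ((⊥ : Ideal B) : Set B) (S : Set B) := by
    rw [Set.disjoint_left]
    rintro x hx ⟨a, ha, t, ht, hat⟩
    have hx0 : x = 0 := by simpa using hx
    subst hx0
    -- `⟨q⟩ ∈ basicOpen t`, its image is open and contains `⟨p⟩`, hence `⟨p'⟩`
    have hqmem : (⟨q, hqprime⟩ : PrimeSpectrum B) ∈ PrimeSpectrum.basicOpen t :=
      (PrimeSpectrum.mem_basicOpen t _).mpr ht
    have himg : (⟨p, hpprime⟩ : PrimeSpectrum A) ∈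
        PrimeSpectrum.comap (algebraMap A B) '' (PrimeSpectrum.basicOpen t : Set (PrimeSpectrum B)) :=
      ⟨⟨q, hqprime⟩, hqmem, rfl⟩
    have hopenimg : IsOpen (PrimeSpectrum.comap (algebraMap A B) ''
        (PrimeSpectrum.basicOpen t : Set (PrimeSpectrum B))) :=
      hopen _ (PrimeSpectrum.basicOpen t).isOpen
    have hspec : (⟨p', hp'prime⟩ : PrimeSpectrum A) ⤳ (⟨p, hpprime⟩ : PrimeSpectrum A) :=
      (PrimeSpectrum.le_iff_specializes ⟨p', hp'prime⟩ ⟨p, hpprime⟩).mp hp'le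
    obtain ⟨r, hrmem, hr⟩ := hspec.mem_open hopenimg himg
    -- `φ(a) * t = 0 ∈ r`, `t ∉ r`, so `a ∈ comap r = p'`, contradiction
    have htr : t ∉ r.asIdeal := (PrimeSpectrum.mem_basicOpen t r).mp hrmem
    have h0r : algebraMap A B a * t ∈ r.asIdeal := hat ▸ r.asIdeal.zero_mem
    rcases r.isPrime.mem_or_mem h0r with h | h
    · apply ha
      have : a ∈ (PrimeSpectrum.comap (algebraMap A B) r).asIdeal := h
      rw [hr] at this
      exact this
    · exact htr h
  obtain ⟨q', hq'prime, -, hq'disj⟩ := Ideal.exists_le_prime_disjoint (⊥ : Ideal B) S h0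
  rw [Set.disjoint_left] at hq'disj
  -- `q' ≤ q`
  have hq'q : q' ≤ q := by
    intro x hx
    by_contra hxq
    exact hq'disj hx ⟨1, p'.primeCompl.one_mem, x, hxq, by simp⟩
  -- `comap q' ≤ p'`
  have hcq' : q'.comap (algebraMap A B) ≤ p' := by
    intro a haq'
    by_contra hap'
    exact hq'disj (Ideal.mem_comap.mp haq') ⟨a, hap', 1, q.primeCompl.one_mem, by simp⟩
  -- minimality of `q` forces `q' = q`, so `p ≤ p'`, so `p = p'` is minimal
  have : q ≤ q' := hq.2 ⟨hq'prime, bot_le⟩ hq'q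
  have hpp' : q.comap (algebraMap A B) = p' :=
    le_antisymm (le_trans (Ideal.comap_mono this) hcq') hp'le
  rw [hpdef, hpp']
  exact hp'

/-- Let `A → B` be a module-finite algebra map between reduced commutative Noetherian rings
such that the induced map `Spec B → Spec A` is open and surjective. A finitely generated
`B`-module `M` is torsion-free over `B` iff it is torsion-free over `A`
(via restriction of scalars). -/
theorem torsionFree_iff_torsionFree_restrictScalars
    (A B : Type*) [CommRing A] [CommRing B] [IsReduced A] [IsReduced B]
    [IsNoetherianRing A] [IsNoetherianRing B] [Algebra A B] [Module.Finite A B]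
    (hopen : IsOpenMap (PrimeSpectrum.comap (algebraMap A B)))
    (hsurj : Function.Surjective (PrimeSpectrum.comap (algebraMap A B)))
    (M : Type*) [AddCommGroup M] [Module B M] [Module A M] [IsScalarTower A B M]
    [Module.Finite B M] :
    Submodule.torsion B M = ⊥ ↔ Submodule.torsion A M = ⊥ := by
  have hint : Algebra.IsIntegral A B := Algebra.IsIntegral.of_finite A B
  constructor
  · -- torsion-free over B ⇒ torsion-free over A
    intro hB
    rw [Submodule.eq_bot_iff] at hB ⊢
    intro m hm
    obtain ⟨⟨a, ha⟩, ham⟩ := (Submodule.mem_torsion_iff m).mp hm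
    -- `φ a` is a non-zero-divisor of `B`
    have hφa : algebraMap A B a ∈ nonZeroDivisors B := by
      by_contra h
      obtain ⟨q, hq, hmem⟩ := aux_exists_minimal_of_not_nonZeroDivisor h
      exact aux_not_nonZeroDivisor_of_mem_minimal
        (aux_comap_minimal_of_minimal hopen hq) (Ideal.mem_comap.mpr hmem) ha
    apply hB m
    exact (Submodule.mem_torsion_iff m).mpr
      ⟨⟨algebraMap A B a, hφa⟩, by simpa [algebraMap_smul] using ham⟩
  · -- torsion-free over A ⇒ torsion-free over B
    intro hA
    rw [Submodule.eq_bot_iff] at hA ⊢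
    intro m hm
    obtain ⟨⟨b, hb⟩, hbm⟩ := (Submodule.mem_torsion_iff m).mp hm
    by_contra hm0
    -- the annihilator of `m` in `A` consists of zero divisors
    have hann : ∀ a ∈ Ideal.torsionOf A M m, a ∉ nonZeroDivisors A := by
      intro a hamem hanzd
      exact hm0 (hA m ((Submodule.mem_torsion_iff m).mpr
        ⟨⟨a, hanzd⟩, (Ideal.mem_torsionOf_iff m a).mp hamem⟩))
    -- by prime avoidance it is contained in a single minimal prime `p` of `A`
    have hfin := minimalPrimes.finite_of_isNoetherianRing A
    obtain ⟨p, hpmin, hple⟩ : ∃ p ∈ minimalPrimes A, Ideal.torsionOf A M m ≤ p := by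
      have hsub : (Ideal.torsionOf A M m : Set A) ⊆ ⋃ p ∈ hfin.toFinset, (p : Set A) := by
        intro a hamem
        obtain ⟨p, hp, hap⟩ := aux_exists_minimal_of_not_nonZeroDivisor (hann a hamem)
        exact Set.mem_biUnion (hfin.mem_toFinset.mpr hp) hap
      have := (Ideal.subset_union_prime (⊥ : Ideal A) (⊥ : Ideal A)
        (fun p hp _ _ => (hfin.mem_toFinset.mp hp).1.1)).mp hsub
      obtain ⟨p, hp, hple⟩ := this
      exact ⟨p, hfin.mem_toFinset.mp hp, hple⟩
    have hpprime : p.IsPrime := hpmin.1.1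
    -- lying over: a prime `Q` of `B` over `p` containing the `B`-annihilator of `m`
    have hcomaple : (Ideal.torsionOf B M m).comap (algebraMap A B) ≤ p := by
      intro a hamem
      apply hple
      rw [Ideal.mem_torsionOf_iff]
      rw [Ideal.mem_comap, Ideal.mem_torsionOf_iff] at hamem
      rw [← algebraMap_smul B a m]
      exact hamem
    obtain ⟨Q, hQle, hQprime, hQcomap⟩ :=
      Ideal.exists_ideal_over_prime_of_isIntegral p (Ideal.torsionOf B M m) hcomaple
    -- a minimal prime `q₀` of `B` below `Q`
    obtain ⟨q₀, hq₀, hq₀Q⟩ := Ideal.exists_minimalPrimes_le (bot_le (a := Q))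
    have hq₀prime : q₀.IsPrime := hq₀.1.1
    have hbQ : b ∈ Q := hQle ((Ideal.mem_torsionOf_iff m b).mpr hbm)
    have hbq₀ : b ∉ q₀ := fun h => aux_not_nonZeroDivisor_of_mem_minimal hq₀ h hb
    -- incomparability gives a prime strictly below the minimal prime `p`
    have hlt : q₀.comap (algebraMap A B) < Q.comap (algebraMap A B) :=
      Ideal.comap_lt_comap_of_integral_mem_sdiff hq₀Q ⟨hbQ, hbq₀⟩ (Algebra.IsIntegral.isIntegral b)
    rw [hQcomap] at hlt
    have : Ideal.IsPrime (q₀.comap (algebraMap A B)) := Ideal.IsPrime.comap _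
    exact absurd (hpmin.2 ⟨this, bot_le⟩ hlt.le) (not_le_of_gt hlt)
end

section
/- Let A be a reduced commutative Noetherian ring, let B be a commutative Noetherian A-algebra that is flat as an A-module, and let N be a finitely generated torsion-free A-module. Then B ⊗_A N is a torsion-free B-module. -/
open scoped TensorProduct

section Aux

variable {A : Type*} [CommRing A]

/-- In the total quotient ring, every nonzerodivisor is a unit. -/
lemma FractionRing.isUnit_of_mem_nonZeroDivisors'
    {x : FractionRing A} (hx : x ∈ nonZeroDivisors (FractionRing A)) : IsUnit x := by
  obtain ⟨⟨a, s⟩, rfl⟩ := IsLocalization.mk'_surjective (nonZeroDivisors A) x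
  have hs : IsUnit (algebraMap A (FractionRing A) s) := IsLocalization.map_units _ s
  have hreg : (algebraMap A (FractionRing A)) a ∈ nonZeroDivisors (FractionRing A) := by
    rw [← IsLocalization.mk'_spec (FractionRing A) a s]
    exact mul_mem hx hs.mem_nonZeroDivisors
  have ha : a ∈ nonZeroDivisors A := by
    rw [mem_nonZeroDivisors_iff_right]
    intro b hb
    have h0 : algebraMap A (FractionRing A) b * algebraMap A (FractionRing A) a = 0 := by
      rw [← map_mul, hb, map_zero]
    have hb0 := (mul_right_mem_nonZeroDivisors_eq_zero_iff hreg).mp h0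
    apply IsFractionRing.injective A (FractionRing A)
    rw [hb0, map_zero]
  have hmul : IsUnit (IsLocalization.mk' (FractionRing A) a s
      * algebraMap A (FractionRing A) s) := by
    rw [IsLocalization.mk'_spec]
    exact IsLocalization.map_units _ ⟨a, ha⟩
  exact isUnit_of_mul_isUnit_left hmul

lemma FractionRing.isPrime_mem_minimalPrimes [IsReduced A] [IsNoetherianRing A]
    {p : Ideal (FractionRing A)} (hp : p.IsPrime) : p ∈ minimalPrimes (FractionRing A) := by
  classical
  haveI : IsNoetherianRing (FractionRing A) :=
    IsLocalization.isNoetherianRing (nonZeroDivisors A) _ inferInstance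
  have hfin : (minimalPrimes (FractionRing A)).Finite :=
    minimalPrimes.finite_of_isNoetherianRing (FractionRing A)
  have hInf : sInf (minimalPrimes (FractionRing A)) = ⊥ := by
    rw [minimalPrimes, Ideal.sInf_minimalPrimes]
    exact nilradical_eq_zero (FractionRing A)
  have hsub : (p : Set (FractionRing A)) ⊆
      ⋃ r ∈ (hfin.toFinset : Set (Ideal (FractionRing A))), ↑(id r : Ideal (FractionRing A)) := by
    intro x hxp
    have hxnzd : x ∉ nonZeroDivisors (FractionRing A) := fun h =>
      hp.ne_top (Ideal.eq_top_of_isUnit_mem _ hxp (FractionRing.isUnit_of_mem_nonZeroDivisors' h))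
    rw [mem_nonZeroDivisors_iff_right] at hxnzd
    push_neg at hxnzd
    obtain ⟨y, hyx, hy⟩ := hxnzd
    have hex : ∃ r ∈ minimalPrimes (FractionRing A), y ∉ r := by
      by_contra h
      push_neg at h
      exact hy (by simpa [hInf] using (Ideal.mem_sInf).2 fun {I} hI => h I hI)
    obtain ⟨r, hr, hyr⟩ := hex
    have hyxr : y * x ∈ r := by rw [hyx]; exact r.zero_mem
    have hxr : x ∈ r := (hr.1.1.mem_or_mem hyxr).resolve_left hyr
    exact Set.mem_biUnion (hfin.mem_toFinset.mpr hr) hxr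
  obtain ⟨r, hrs, hpr⟩ :=
    (Ideal.subset_union_prime (s := hfin.toFinset) (f := id) p p
      (fun i hi _ _ => (hfin.mem_toFinset.mp hi).1.1)).mp hsub
  have hr := hfin.mem_toFinset.mp hrs
  have hrp : (id r : Ideal (FractionRing A)) ≤ p := hr.2 ⟨hp, bot_le⟩ hpr
  have : p = r := le_antisymm hpr hrp
  rw [this]
  exact hr

lemma FractionRing.isMaximal_of_isPrime' [IsReduced A] [IsNoetherianRing A]
    {p : Ideal (FractionRing A)} (hp : p.IsPrime) : p.IsMaximal := by
  obtain ⟨m, hm, hpm⟩ := p.exists_le_maximal hp.ne_top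
  have hmin := FractionRing.isPrime_mem_minimalPrimes (A := A) hm.isPrime
  have hmp : m ≤ p := hmin.2 ⟨hp, bot_le⟩ hpm
  have hpe : p = m := le_antisymm hpm hmp
  rw [hpe]
  exact hm

set_option synthInstance.maxHeartbeats 1000000 in
set_option maxHeartbeats 1000000 in
lemma FractionRing.isSemisimpleRing_aux (A : Type*) [CommRing A]
    [IsReduced A] [IsNoetherianRing A] : IsSemisimpleRing (FractionRing A) := by
  classical
  haveI : IsNoetherianRing (FractionRing A) :=
    IsLocalization.isNoetherianRing (nonZeroDivisors A) _ inferInstance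
  have hfin : (minimalPrimes (FractionRing A)).Finite :=
    minimalPrimes.finite_of_isNoetherianRing (FractionRing A)
  haveI : Finite {I : Ideal (FractionRing A) | I.IsMaximal} :=
    (hfin.subset fun I hI =>
      FractionRing.isPrime_mem_minimalPrimes (A := A) (Ideal.IsMaximal.isPrime hI)).to_subtype
  letI : ∀ I : {I : Ideal (FractionRing A) | I.IsMaximal}, Field (FractionRing A ⧸ I.1) :=
    fun I => @Ideal.Quotient.field _ _ I.1 I.2
  have hbot : (⊥ : Ideal (FractionRing A)) =
      ⨅ I : {I : Ideal (FractionRing A) | I.IsMaximal}, I.1 := by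
    ext x
    simp only [Ideal.mem_bot, Submodule.mem_iInf, Subtype.forall, Set.mem_setOf_eq]
    constructor
    · rintro rfl I _
      exact I.zero_mem
    · intro h
      have hnil : IsNilpotent x := nilpotent_iff_mem_prime.mpr fun J hJ =>
        h J (FractionRing.isMaximal_of_isPrime' hJ)
      exact hnil.eq_zero
  let e : FractionRing A ≃+* ∀ I : {I : Ideal (FractionRing A) | I.IsMaximal},
      FractionRing A ⧸ I.1 :=
    .trans (.symm <| .quotientBot (FractionRing A)) <| .trans
      (Ideal.quotEquivOfEq hbot)
      (Ideal.quotientInfRingEquivPiQuotient _ fun I J h =>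
        Ideal.isCoprime_iff_sup_eq.mpr <| I.2.coprime_of_ne J.2 <| by rwa [Ne, Subtype.coe_inj])
  exact e.symm.isSemisimpleRing

/-- Torsion-freeness descends along injective linear maps. -/
lemma torsion_eq_bot_of_injective {B M M' : Type*} [CommRing B] [AddCommGroup M] [Module B M]
    [AddCommGroup M'] [Module B M'] (f : M →ₗ[B] M') (hf : Function.Injective f)
    (h : Submodule.torsion B M' = ⊥) : Submodule.torsion B M = ⊥ := by
  rw [eq_bot_iff]
  intro x hx
  obtain ⟨a, ha⟩ := (Submodule.mem_torsion_iff x).mp hx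
  have ha' : (a : B) • x = 0 := ha
  have hsm : (a : B) • f x = 0 := by rw [← map_smul, ha', map_zero]
  have hfx : f x ∈ Submodule.torsion B M' :=
    (Submodule.mem_torsion_iff _).mpr ⟨a, hsm⟩
  rw [h, Submodule.mem_bot] at hfx
  rw [Submodule.mem_bot]
  exact hf (by rw [hfx, map_zero])

/-- The base change of a flat module is torsion-free. -/
lemma torsion_baseChange_flat_aux (A B X : Type*) [CommRing A] [CommRing B] [Algebra A B]
    [AddCommGroup X] [Module A X] [Module.Flat A X] :
    Submodule.torsion B (B ⊗[A] X) = ⊥ := by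
  rw [eq_bot_iff]
  intro x hx
  obtain ⟨⟨b, hb⟩, hbx⟩ := (Submodule.mem_torsion_iff x).mp hx
  have hbx' : b • x = 0 := hbx
  have key : ∀ y : B ⊗[A] X, b • y = LinearMap.rTensor X (LinearMap.mulLeft A b) y := by
    intro y
    induction y using TensorProduct.induction_on with
    | zero => simp
    | tmul c z =>
      rw [LinearMap.rTensor_tmul, TensorProduct.smul_tmul', LinearMap.mulLeft_apply,
        smul_eq_mul]
    | add y₁ y₂ h₁ h₂ => rw [smul_add, map_add, h₁, h₂]
  have hinj : Function.Injective (LinearMap.rTensor X (LinearMap.mulLeft A b)) := by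
    apply Module.Flat.rTensor_preserves_injective_linearMap
    intro y₁ y₂ h
    simp only [LinearMap.mulLeft_apply] at h
    have h2 : (y₁ - y₂) * b = 0 := by
      rw [sub_mul, mul_comm y₁, mul_comm y₂, h, sub_self]
    exact sub_eq_zero.mp ((mul_right_mem_nonZeroDivisors_eq_zero_iff hb).mp h2)
  rw [Submodule.mem_bot]
  apply hinj
  rw [← key, hbx', map_zero]

end Aux

/-- For a reduced commutative Noetherian ring `A`, a commutative Noetherian `A`-algebra `B`
that is flat as an `A`-module, and a finitely generated torsion-free `A`-module `N`,
the base change `B ⊗[A] N` is a torsion-free `B`-module. -/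
theorem torsionFree_baseChange_of_flat
    (A B : Type*) [CommRing A] [IsReduced A] [IsNoetherianRing A]
    [CommRing B] [IsNoetherianRing B] [Algebra A B] [Module.Flat A B]
    (N : Type*) [AddCommGroup N] [Module A N] [Module.Finite A N]
    (hN : Submodule.torsion A N = ⊥) :
    Submodule.torsion B (B ⊗[A] N) = ⊥ := by
  classical
  haveI : IsSemisimpleRing (FractionRing A) := FractionRing.isSemisimpleRing_aux A
  set K := FractionRing A
  set M := LocalizedModule (nonZeroDivisors A) N
  -- a surjection from a free `K`-module onto `M`, split using semisimplicity
  let π : (M →₀ K) →ₗ[K] M := Finsupp.linearCombination K id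
  have hπ : Function.Surjective π := Finsupp.linearCombination_id_surjective K M
  obtain ⟨C, hC⟩ := ComplementedLattice.exists_isCompl (LinearMap.ker π)
  let e1 : M ≃ₗ[K] ((M →₀ K) ⧸ LinearMap.ker π) := (π.quotKerEquivOfSurjective hπ).symm
  let e2 : ((M →₀ K) ⧸ LinearMap.ker π) ≃ₗ[K] C := Submodule.quotientEquivOfIsCompl _ _ hC
  let s : M →ₗ[K] (M →₀ K) := C.subtype ∘ₗ (e2.toLinearMap ∘ₗ e1.toLinearMap)
  have hs : Function.Injective s :=
    C.injective_subtype.comp (e2.injective.comp e1.injective)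
  -- the natural map `N → M` is injective since `N` is torsion-free
  have hmk : Function.Injective (LocalizedModule.mkLinearMap (nonZeroDivisors A) N) := by
    intro x y hxy
    rw [LocalizedModule.mkLinearMap_apply, LocalizedModule.mkLinearMap_apply,
      LocalizedModule.mk_eq] at hxy
    obtain ⟨u, hu⟩ := hxy
    simp only [one_smul] at hu
    have hsub : u • (x - y) = 0 := by rw [smul_sub, hu, sub_self]
    have hx0 : x - y ∈ Submodule.torsion A N := (Submodule.mem_torsion_iff _).mpr ⟨u, hsub⟩
    rw [hN, Submodule.mem_bot] at hx0
    exact sub_eq_zero.mp hx0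
  -- the composite `A`-linear injection of `N` into the flat module `M →₀ K`
  let ℓ : N →ₗ[A] (M →₀ K) :=
    (s.restrictScalars A) ∘ₗ (LocalizedModule.mkLinearMap (nonZeroDivisors A) N)
  have hℓ : Function.Injective ℓ := hs.comp hmk
  haveI : Module.Flat A (M →₀ K) := Module.Flat.trans A K (M →₀ K)
  have hbc : Function.Injective (LinearMap.baseChange B ℓ) := by
    have : ⇑(LinearMap.baseChange B ℓ) = ⇑(LinearMap.lTensor B ℓ) :=
      LinearMap.baseChange_eq_ltensor ℓ
    rw [show (Function.Injective (LinearMap.baseChange B ℓ)) =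
      Function.Injective (LinearMap.lTensor B ℓ) from congrArg _ this]
    exact Module.Flat.lTensor_preserves_injective_linearMap ℓ hℓ
  exact torsion_eq_bot_of_injective (LinearMap.baseChange B ℓ) hbc
    (torsion_baseChange_flat_aux A B (M →₀ K))
end

section
/- Let (A, 𝔪) be a reduced commutative Noetherian local ring, let (B, 𝔫) be a commutative Noetherian local ring, let φ : A → B be a local ring homomorphism making B a flat A-module, and let M be a finitely generated B-module. Then M is flat as an A-module if and only if for every finitely generated torsion-free A-module N, the A-module N ⊗_A M is torsion-free over A. -/
open scoped TensorProduct

open TensorProduct LinearMap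

universe u

/-- A reduced Noetherian commutative ring in which every non-zero-divisor is a unit
is semisimple. -/
theorem isSemisimpleRing_of_reduced_noetherian (Q : Type*) [CommRing Q] [IsReduced Q]
    [IsNoetherianRing Q] (hQ : ∀ q : Q, q ∈ nonZeroDivisors Q → IsUnit q) :
    IsSemisimpleRing Q := by
  classical
  rcases subsingleton_or_nontrivial Q with h | h
  · haveI : Subsingleton (Submodule Q Q) :=
      ⟨fun a b => by
        ext x
        rw [Subsingleton.elim x (0 : Q)]
        simp⟩
    infer_instance
  have hfin : (minimalPrimes Q).Finite := minimalPrimes.finite_of_isNoetherianRing Q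
  have hsInf : sInf (minimalPrimes Q) = ⊥ := by
    have h1 : sInf ((⊥ : Ideal Q).minimalPrimes) = (⊥ : Ideal Q).radical :=
      Ideal.sInf_minimalPrimes
    have h2 : (⊥ : Ideal Q).radical = nilradical Q := by
      rw [nilradical, Ideal.zero_eq_bot]
    rw [minimalPrimes, h1, h2, nilradical_eq_zero, Submodule.zero_eq_bot]
  -- every nonunit lies in some minimal prime
  have hzd : ∀ x : Q, ¬IsUnit x → ∃ p ∈ minimalPrimes Q, x ∈ p := by
    intro x hx
    have hx' : x ∉ nonZeroDivisors Q := fun hmem => hx (hQ x hmem)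
    rw [mem_nonZeroDivisors_iff_right] at hx'
    push_neg at hx'
    obtain ⟨y, hyx, hy0⟩ := hx'
    have hy : y ∉ sInf (minimalPrimes Q) := by
      rw [hsInf]
      simpa using hy0
    rw [Ideal.mem_sInf] at hy
    push_neg at hy
    obtain ⟨p, hp, hyp⟩ := hy
    haveI hpP : p.IsPrime := hp.1.1
    refine ⟨p, hp, ?_⟩
    rcases hpP.mem_or_mem (show y * x ∈ p by rw [hyx]; exact p.zero_mem) with hmem | hmem
    · exact absurd hmem hyp
    · exact hmem
  -- every minimal prime is maximal
  have hmax : ∀ p ∈ minimalPrimes Q, p.IsMaximal := by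
    intro p hp
    haveI hpP : p.IsPrime := hp.1.1
    obtain ⟨m, hm, hpm⟩ := Ideal.exists_le_maximal p hpP.ne_top
    have hprime : ∀ i ∈ hfin.toFinset, i ≠ p → i ≠ p → (_root_.id i : Ideal Q).IsPrime :=
      fun i hi _ _ => (hfin.mem_toFinset.mp hi).1.1
    have hsub : (m : Set Q) ⊆ ⋃ i ∈ (↑hfin.toFinset : Set (Ideal Q)), ↑(_root_.id i) := by
      intro x hxm
      have hxnu : ¬IsUnit x := fun hu => hm.ne_top (m.eq_top_of_isUnit_mem hxm hu)
      obtain ⟨q, hq, hxq⟩ := hzd x hxnu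
      exact Set.mem_biUnion (Finset.mem_coe.mpr (hfin.mem_toFinset.mpr hq)) hxq
    obtain ⟨p', hp's, hmp'⟩ := (Ideal.subset_union_prime p p hprime).mp hsub
    have hp' := hfin.mem_toFinset.mp hp's
    have hpp' : p ≤ (id p' : Ideal Q) := hpm.trans hmp'
    have h1 : (p' : Ideal Q) ≤ p := hp'.2 ⟨hpP, bot_le⟩ hpp'
    have hpm' : p = m := le_antisymm hpm (hmp'.trans h1)
    exact hpm' ▸ hm
  -- CRT decomposition into a finite product of fields
  haveI : Finite ↥(minimalPrimes Q) := hfin.to_subtype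
  have hPM : ∀ i : ↥(minimalPrimes Q), (i : Ideal Q).IsMaximal := fun i => hmax i i.2
  have hIco : ∀ i j : ↥(minimalPrimes Q), i ≠ j →
      IsCoprime (i : Ideal Q) (j : Ideal Q) := fun i j hij =>
    Ideal.isCoprime_iff_sup_eq.mpr <|
      (hPM i).coprime_of_ne (hPM j) (by rwa [Ne, Subtype.coe_inj])
  have hInf : (⨅ i : ↥(minimalPrimes Q), (i : Ideal Q)) = ⊥ := by
    rw [← hsInf, sInf_eq_iInf']
  let e : Q ≃+* ∀ i : ↥(minimalPrimes Q), Q ⧸ (i : Ideal Q) :=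
    ((RingEquiv.quotientBot Q).symm.trans (Ideal.quotEquivOfEq hInf.symm)).trans
      (Ideal.quotientInfRingEquivPiQuotient _ hIco)
  letI : ∀ i : ↥(minimalPrimes Q), Field (Q ⧸ (i : Ideal Q)) := fun i =>
    letI := hPM i
    Ideal.Quotient.field _
  haveI : ∀ i : ↥(minimalPrimes Q), IsSemisimpleRing (Q ⧸ (i : Ideal Q)) := fun i =>
    inferInstance
  exact e.symm.isSemisimpleRing

/-- Every module over a semisimple commutative ring is flat. -/
theorem Module.Flat.of_isSemisimpleRing {Q : Type*} [CommRing Q] [IsSemisimpleRing Q]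
    (N : Type*) [AddCommGroup N] [Module Q N] : Module.Flat Q N := by
  rw [Module.Flat.iff_rTensor_injective']
  intro I
  obtain ⟨J, hJ⟩ := exists_isCompl I
  have hleft : Function.LeftInverse (rTensor N (I.projectionOnto J hJ))
      (rTensor N I.subtype) := fun z => by
    rw [← LinearMap.comp_apply, ← rTensor_comp,
      Submodule.projectionOnto_comp_subtype hJ, rTensor_id, LinearMap.id_apply]
  exact hleft.injective

/-- In the total fraction ring of a commutative ring, every non-zero-divisor is a unit. -/
theorem FractionRing.isUnit_of_nonZeroDivisor (A : Type u) [CommRing A]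
    (q : FractionRing A) (hq : q ∈ nonZeroDivisors (FractionRing A)) : IsUnit q := by
  obtain ⟨⟨a, s⟩, rfl⟩ := IsLocalization.mk'_surjective (nonZeroDivisors A) q
  dsimp only at hq ⊢
  have ha : a ∈ nonZeroDivisors A := by
    rw [mem_nonZeroDivisors_iff_right]
    intro b hb
    have hmul : (algebraMap A (FractionRing A) b) *
        IsLocalization.mk' (FractionRing A) a s = 0 := by
      rw [← IsLocalization.mk'_one (M := nonZeroDivisors A) (FractionRing A) b,
        ← IsLocalization.mk'_mul, hb, IsLocalization.mk'_zero]
    have hb0 : algebraMap A (FractionRing A) b = 0 := mem_nonZeroDivisors_iff_right.mp hq _ hmul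
    exact IsFractionRing.injective A (FractionRing A)
      (show algebraMap A (FractionRing A) b = algebraMap A (FractionRing A) 0 by
        rw [hb0, map_zero])
  have h1 : IsUnit (algebraMap A (FractionRing A) a) :=
    IsLocalization.map_units (FractionRing A) (⟨a, ha⟩ : nonZeroDivisors A)
  have h2 : IsUnit (IsLocalization.mk' (FractionRing A) (1 : A) s) :=
    IsUnit.of_mul_eq_one (algebraMap A (FractionRing A) s) (by
      rw [IsLocalization.mk'_spec, map_one])
  rw [IsLocalization.mk'_eq_mul_mk'_one]
  exact h1.mul h2

set_option maxHeartbeats 1000000 in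
/-- Over a reduced commutative ring, any element of `I ⊗[A] M` killed by the natural map
`I ⊗[A] M → A ⊗[A] M` is torsion. -/
theorem torsion_of_rTensor_eq_zero (A : Type u) [CommRing A] [IsReduced A]
    [IsNoetherianRing A] (M : Type u) [AddCommGroup M] [Module A M] (I : Ideal A)
    (x : I ⊗[A] M) (hx : rTensor M I.subtype x = 0) :
    ∃ s : nonZeroDivisors A, s • x = 0 := by
  classical
  set Q := FractionRing A
  haveI : IsNoetherianRing Q :=
    IsLocalization.isNoetherianRing (nonZeroDivisors A) Q inferInstance
  haveI : IsSemisimpleRing Q :=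
    isSemisimpleRing_of_reduced_noetherian Q (FractionRing.isUnit_of_nonZeroDivisor A)
  haveI : Module.Flat Q (Q ⊗[A] M) := Module.Flat.of_isSemisimpleRing _
  -- the natural map `I ⊗ M → M`
  let f : I ⊗[A] M →ₗ[A] M := (TensorProduct.lid A M).toLinearMap ∘ₗ rTensor M I.subtype
  have hfx : f x = 0 := by simp [f, hx]
  -- the injective `Q`-linear map `Q ⊗[A] I → Q`
  let j : Q ⊗[A] I →ₗ[Q] Q :=
    (AlgebraTensorModule.rid A Q Q).toLinearMap ∘ₗ I.subtype.baseChange Q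
  have hj : Function.Injective j := by
    refine (AlgebraTensorModule.rid A Q Q).injective.comp ?_
    have hc : ⇑(I.subtype.baseChange Q) = ⇑(lTensor Q I.subtype) :=
      LinearMap.baseChange_eq_ltensor _
    rw [hc]
    exact Module.Flat.lTensor_preserves_injective_linearMap _ Subtype.val_injective
  -- assemble the composite map `Q ⊗[A] (I ⊗[A] M) → Q ⊗[A] M`
  let g1 : Q ⊗[A] (I ⊗[A] M) ≃ₗ[A] (Q ⊗[A] I) ⊗[A] M := (TensorProduct.assoc A Q I M).symm
  let g2 : (Q ⊗[A] I) ⊗[Q] (Q ⊗[A] M) ≃ₗ[Q] (Q ⊗[A] I) ⊗[A] M :=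
    AlgebraTensorModule.cancelBaseChange A Q Q (Q ⊗[A] I) M
  let g3 : (Q ⊗[A] I) ⊗[Q] (Q ⊗[A] M) →ₗ[Q] Q ⊗[Q] (Q ⊗[A] M) := rTensor (Q ⊗[A] M) j
  let g4 : Q ⊗[Q] (Q ⊗[A] M) ≃ₗ[Q] Q ⊗[A] M := TensorProduct.lid Q (Q ⊗[A] M)
  let Φ : Q ⊗[A] (I ⊗[A] M) →ₗ[A] Q ⊗[A] M :=
    ((g4.toLinearMap ∘ₗ g3 ∘ₗ g2.symm.toLinearMap).restrictScalars A) ∘ₗ g1.toLinearMap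
  have hΦinj : Function.Injective Φ := by
    intro u v huv
    have huv' : g4 (g3 (g2.symm (g1 u))) = g4 (g3 (g2.symm (g1 v))) := huv
    exact g1.injective (g2.symm.injective
      (Module.Flat.rTensor_preserves_injective_linearMap j hj (g4.injective huv')))
  have hΦeq : Φ = lTensor Q f := by
    apply TensorProduct.ext'
    intro q z
    induction z with
    | zero => simp
    | add a b ha hb => simp_all [tmul_add]
    | tmul i m =>
      show Φ (q ⊗ₜ (i ⊗ₜ m)) = q ⊗ₜ f (i ⊗ₜ m)
      have h1 : g1 (q ⊗ₜ (i ⊗ₜ m)) = (q ⊗ₜ i) ⊗ₜ m := by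
        simp [g1, TensorProduct.assoc_symm_tmul]
      have h2 : g2.symm ((q ⊗ₜ[A] i) ⊗ₜ[A] m) = (q ⊗ₜ[A] i) ⊗ₜ[Q] ((1 : Q) ⊗ₜ[A] m) := by
        simp [g2, AlgebraTensorModule.cancelBaseChange_symm_tmul]
      have h3 : g3 ((q ⊗ₜ[A] i) ⊗ₜ[Q] ((1 : Q) ⊗ₜ[A] m)) =
          (j (q ⊗ₜ[A] i)) ⊗ₜ[Q] ((1 : Q) ⊗ₜ[A] m) := rfl
      have hja : j (q ⊗ₜ[A] i) = (i : A) • q := by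
        simp [j, LinearMap.baseChange_eq_ltensor]
      have h4 : g4 (((i : A) • q) ⊗ₜ[Q] ((1 : Q) ⊗ₜ[A] m)) =
          ((i : A) • q) • ((1 : Q) ⊗ₜ[A] m) := by
        simp [g4]
      have h5 : f (i ⊗ₜ m) = (i : A) • m := by
        simp [f]
      show (g4.toLinearMap ∘ₗ g3 ∘ₗ g2.symm.toLinearMap) (g1 (q ⊗ₜ (i ⊗ₜ m))) =
        q ⊗ₜ f (i ⊗ₜ m)
      rw [h1]
      simp only [LinearMap.comp_apply, LinearEquiv.coe_coe]
      rw [h2, h3, hja, h4, h5]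
      rw [smul_tmul', smul_eq_mul, mul_one]
      exact smul_tmul _ _ _
  -- conclude `1 ⊗ x = 0` in `Q ⊗[A] (I ⊗[A] M)`
  have hzero : (1 : Q) ⊗ₜ[A] x = 0 := by
    apply hΦinj
    rw [hΦeq, map_zero]
    show (1 : Q) ⊗ₜ[A] (f x) = 0
    rw [hfx, tmul_zero]
  -- the map `z ↦ 1 ⊗ z` is a localization map, so `x` is torsion
  haveI : IsLocalizedModule (nonZeroDivisors A)
      (TensorProduct.mk A Q (I ⊗[A] M) 1) :=
    (isLocalizedModule_iff_isBaseChange (nonZeroDivisors A) Q _).mpr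
      (TensorProduct.isBaseChange A (I ⊗[A] M) Q)
  exact (IsLocalizedModule.eq_zero_iff (nonZeroDivisors A)
    (TensorProduct.mk A Q (I ⊗[A] M) 1)).mp hzero

/-- Let `(A, 𝔪)` be a reduced commutative Noetherian local ring, `(B, 𝔫)` a commutative
Noetherian local ring, `A → B` a local homomorphism making `B` flat over `A`, and `M` a
finitely generated `B`-module. Then `M` is flat over `A` iff for every finitely generated
torsion-free `A`-module `N`, the `A`-module `N ⊗[A] M` is torsion-free over `A`. -/
theorem flat_iff_tensor_torsionFree
    (A : Type u) [CommRing A] [IsReduced A] [IsNoetherianRing A] [IsLocalRing A]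
    (B : Type*) [CommRing B] [IsNoetherianRing B] [IsLocalRing B]
    [Algebra A B] [IsLocalHom (algebraMap A B)] [Module.Flat A B]
    (M : Type u) [AddCommGroup M] [Module B M] [Module A M] [IsScalarTower A B M]
    [Module.Finite B M] :
    Module.Flat A M ↔
      ∀ (N : Type u) [AddCommGroup N] [Module A N] [Module.Finite A N],
        Submodule.torsion A N = ⊥ → Submodule.torsion A (N ⊗[A] M) = ⊥ := by
  constructor
  · -- flat ⇒ tensor products with torsion-free modules are torsion-free
    intro hM N _ _ _ hN
    rw [eq_bot_iff]
    rintro x ⟨s, hs⟩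
    rw [Submodule.mem_bot]
    -- multiplication by `s` is injective on `N`
    have hinj : Function.Injective (LinearMap.lsmul A N s.1) := by
      intro a b hab
      have : (s.1 : A) • (a - b) = 0 := by
        simp only [LinearMap.lsmul_apply] at hab
        rw [smul_sub, hab, sub_self]
      have hmem : a - b ∈ Submodule.torsion A N := ⟨s, this⟩
      rw [hN, Submodule.mem_bot] at hmem
      exact sub_eq_zero.mp hmem
    have hinj2 : Function.Injective (rTensor M (LinearMap.lsmul A N s.1)) :=
      Module.Flat.rTensor_preserves_injective_linearMap _ hinj
    have heq : rTensor M (LinearMap.lsmul A N s.1) x = s.1 • x := by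
      have : rTensor M (LinearMap.lsmul A N s.1) = LinearMap.lsmul A (N ⊗[A] M) s.1 := by
        apply TensorProduct.ext'
        intro n m
        simp [smul_tmul']
      rw [this]
      rfl
    apply hinj2
    rw [heq, map_zero]
    exact hs
  · -- torsion-free tensor products ⇒ flat
    intro h
    rw [Module.Flat.iff_rTensor_injective']
    intro I
    -- the ideal `I` is a torsion-free finitely generated `A`-module
    haveI : Module.Finite A ↥I := Module.Finite.iff_fg.mpr (IsNoetherian.noetherian I)
    have hItf : Submodule.torsion A ↥I = ⊥ := by
      rw [eq_bot_iff]
      rintro ⟨a, haI⟩ ⟨s, hs⟩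
      rw [Submodule.mem_bot]
      have h0 : s.1 * a = 0 := by
        have hv := congrArg (Subtype.val) hs
        simpa [Submonoid.smul_def, smul_eq_mul] using hv
      exact Subtype.ext (by simpa using mem_nonZeroDivisors_iff_right.mp s.2 a (by rwa [mul_comm]))
    have htor := h ↥I hItf
    intro x y hxy
    have hz : rTensor M I.subtype (x - y) = 0 := by
      rw [map_sub, hxy, sub_self]
    obtain ⟨s, hs⟩ := torsion_of_rTensor_eq_zero A M I (x - y) hz
    have hmem : x - y ∈ Submodule.torsion A (↥I ⊗[A] M) := ⟨s, hs⟩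
    rw [htor, Submodule.mem_bot] at hmem
    exact sub_eq_zero.mp hmem
end

section
/- Let (A, 𝔪, k) be a reduced commutative Noetherian local ring and M an arbitrary A-module. If the A-module 𝔪 ⊗_A M is torsion-free over A, then the canonical map 𝔪 ⊗_A M → M (induced by the inclusion 𝔪 ⊆ A) is injective; equivalently, Tor₁^A(k, M) = 0. -/
open scoped TensorProduct

/-- In a reduced Noetherian local ring with nonzero maximal ideal, the maximal ideal
contains a non-zero-divisor. -/
lemma exists_nonZeroDivisor_mem_maximalIdeal
    (A : Type*) [CommRing A] [IsReduced A] [IsNoetherianRing A] [IsLocalRing A]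
    (hbot : IsLocalRing.maximalIdeal A ≠ ⊥) :
    ∃ r ∈ IsLocalRing.maximalIdeal A, r ∈ nonZeroDivisors A := by
  by_contra hcon
  push_neg at hcon
  -- every element of 𝔪 lies in some minimal prime
  have hfin : (minimalPrimes A).Finite := minimalPrimes.finite_of_isNoetherianRing A
  have hsub : (IsLocalRing.maximalIdeal A : Set A) ⊆ ⋃ p ∈ hfin.toFinset, (id p : Ideal A) := by
    intro r hr
    obtain ⟨b, hb0, hb⟩ := by
      have := hcon r hr
      rw [mem_nonZeroDivisors_iff_right] at this
      push_neg at this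
      exact this
    -- b ≠ 0, b * r = 0 ; find minimal prime not containing b
    have hnil : sInf ((⊥ : Ideal A).minimalPrimes) = ⊥ := by
      rw [Ideal.sInf_minimalPrimes]
      exact nilradical_eq_zero A
    have : ∃ p ∈ (⊥ : Ideal A).minimalPrimes, b ∉ p := by
      by_contra hall
      push_neg at hall
      exact hb (by rwa [← Submodule.mem_bot (R := A), ← hnil, Ideal.mem_sInf])
    obtain ⟨p, hp, hbp⟩ := this
    have hprime : p.IsPrime := hp.1.1
    have : r ∈ p := by
      rcases hprime.mem_or_mem (show b * r ∈ p from hb0 ▸ p.zero_mem) with h' | h'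
      · exact absurd h' hbp
      · exact h'
    exact Set.mem_biUnion (hfin.mem_toFinset.mpr hp) this
  obtain ⟨p, hps, hple⟩ :=
    (Ideal.subset_union_prime (IsLocalRing.maximalIdeal A) (IsLocalRing.maximalIdeal A)
      (fun p hp _ _ => by
        have : p ∈ minimalPrimes A := by simpa using hp
        exact this.1.1)).mp hsub
  have hpmin : p ∈ minimalPrimes A := by simpa using hps
  have hpprime : p.IsPrime := hpmin.1.1
  have hpm : p = IsLocalRing.maximalIdeal A :=
    le_antisymm (IsLocalRing.le_maximalIdeal hpprime.ne_top) hple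
  -- so 𝔪 is a minimal prime; in a local ring it is then the only prime
  have hall : ∀ q ∈ minimalPrimes A, q = IsLocalRing.maximalIdeal A := by
    intro q hq
    have hq1 : q.IsPrime := hq.1.1
    have hle : q ≤ IsLocalRing.maximalIdeal A := IsLocalRing.le_maximalIdeal hq1.ne_top
    have := (hpm ▸ hpmin).2 ⟨hq1, bot_le⟩ hle
    exact le_antisymm hle this
  have : sInf ((⊥ : Ideal A).minimalPrimes) = IsLocalRing.maximalIdeal A := by
    have hne : (minimalPrimes A).Nonempty := ⟨p, hpmin⟩
    apply le_antisymm
    · exact sInf_le (show IsLocalRing.maximalIdeal A ∈ minimalPrimes A from hpm ▸ hpmin)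
    · exact le_sInf fun q hq => (hall q hq).ge
  rw [Ideal.sInf_minimalPrimes] at this
  rw [show (⊥ : Ideal A).radical = ⊥ from nilradical_eq_zero A] at this
  exact hbot this.symm

/-- Let `(A, 𝔪, k)` be a reduced commutative Noetherian local ring and `M` an arbitrary
`A`-module. If `𝔪 ⊗[A] M` is torsion-free over `A`, then the canonical map
`𝔪 ⊗[A] M → M` induced by the inclusion `𝔪 ⊆ A` (sending `a ⊗ m` to `a • m`)
is injective. -/
theorem maximalIdeal_tensor_torsionFree_implies_injective
    (A : Type*) [CommRing A] [IsReduced A] [IsNoetherianRing A] [IsLocalRing A]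
    (M : Type*) [AddCommGroup M] [Module A M]
    (h : Submodule.torsion A ((IsLocalRing.maximalIdeal A) ⊗[A] M) = ⊥) :
    Function.Injective
      (TensorProduct.lift ((LinearMap.lsmul A M).comp
        (Submodule.subtype (IsLocalRing.maximalIdeal A)))) := by
  set 𝔪 := IsLocalRing.maximalIdeal A with h𝔪
  set φ : 𝔪 ⊗[A] M →ₗ[A] M :=
    TensorProduct.lift ((LinearMap.lsmul A M).comp (Submodule.subtype 𝔪)) with hφ
  -- Step 1: the kernel of φ is annihilated by 𝔪
  have key : ∀ a : A, a ∈ 𝔪 → ∀ x : 𝔪 ⊗[A] M, φ x = 0 → a • x = 0 := by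
    intro a ha x hx
    have hcomp : ∀ y : 𝔪 ⊗[A] M,
        (TensorProduct.mk A 𝔪 M ⟨a, ha⟩) (φ y) = a • y := by
      intro y
      induction y using TensorProduct.induction_on with
      | zero => simp
      | tmul b m =>
        simp only [hφ, TensorProduct.lift.tmul, LinearMap.coe_comp, Function.comp_apply,
          Submodule.coe_subtype, LinearMap.lsmul_apply, TensorProduct.mk_apply]
        rw [← TensorProduct.smul_tmul, TensorProduct.smul_tmul']
        have : (b : A) • (⟨a, ha⟩ : 𝔪) = a • b := Subtype.ext (mul_comm (b : A) a)
        rw [this, ← TensorProduct.smul_tmul']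
      | add u v hu hv => simp [map_add, smul_add, hu, hv]
    have := hcomp x
    rw [hx, map_zero] at this
    exact this.symm
  by_cases hbot : 𝔪 = ⊥
  · -- 𝔪 = 0 : the tensor product is trivial
    have htriv : ∀ x : 𝔪 ⊗[A] M, x = 0 := by
      intro x
      induction x using TensorProduct.induction_on with
      | zero => rfl
      | tmul b m =>
        have : (b : A) = 0 := by
          have hb2 : (b : A) ∈ (⊥ : Ideal A) := by rw [← hbot]; exact b.2
          simpa using hb2
        have hb : b = 0 := Subtype.ext this
        rw [hb, TensorProduct.zero_tmul]
      | add u v hu hv => rw [hu, hv, add_zero]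
    intro x y _
    rw [htriv x, htriv y]
  · obtain ⟨r, hr𝔪, hreg⟩ := exists_nonZeroDivisor_mem_maximalIdeal A hbot
    rw [← LinearMap.ker_eq_bot (f := φ), eq_bot_iff]
    intro x hx
    have hrx : r • x = 0 := key r hr𝔪 x hx
    have : x ∈ Submodule.torsion A (𝔪 ⊗[A] M) :=
      (Submodule.mem_torsion_iff x).mpr ⟨⟨r, hreg⟩, hrx⟩
    rwa [h] at this
end
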